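/- Let A be a commutative ring which is a ℂ-algebra and let x, z ∈ A satisfy x·z = 0. Fix β, t ∈ ℂ and an integer N ≥ 1. Then the normalized Branson–Gover element factorizes as a product of 'second-order' factors: L̄_N = ∏_{l=1}^{N} ( (β/2+N−l+1)(β/2−N+l)·x + (β/2+N−l)(β/2−N+l−1)·z + (β/2−N+l−1)(β/2−N+l)(β/2+N−l)(β/2+N−l+1)·t ). -/

import Mathlib

open Finset

/-- Ascending Pochhammer symbol `(a)_k = ∏_{i=0}^{k-1} (a+i)`. -/
noncomputable def poch (a : ℂ) (k : ℕ) : ℂ := ∏ i ∈ Finset.range k, (a + i)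

/-- `P_N = ∏_{l=1}^N (x + (β/2+l-1)(β/2-l)·t)`, modelling `(2J/n)^N R_N(y^(+);0)`. -/
noncomputable def Ppoly {A : Type*} [CommRing A] [Algebra ℂ A] (x : A) (β t : ℂ) (N : ℕ) : A :=
  ∏ l ∈ Finset.Icc 1 N, (x + ((β/2 + (l:ℂ) - 1) * (β/2 - (l:ℂ)) * t) • (1 : A))

/-- `Q_N = ∑_{j=1}^N (β/2-N+j+1)_{2(N-j)} t^{N-j} z ∏_{l=1}^{j-1} (z + (β/2+N-l+1)(β/2-N+l)·t)`,
modelling `(2J/n)^N R^(1)_N(y^(1))`. -/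
noncomputable def Qpoly {A : Type*} [CommRing A] [Algebra ℂ A] (z : A) (β t : ℂ) (N : ℕ) : A :=
  ∑ j ∈ Finset.Icc 1 N,
    (poch (β/2 - (N:ℂ) + (j:ℂ) + 1) (2*(N-j)) * t^(N-j)) •
      (z * ∏ l ∈ Finset.Icc 1 (j-1), (z + ((β/2 + (N:ℂ) - (l:ℂ) + 1) * (β/2 - (N:ℂ) + (l:ℂ)) * t) • (1 : A)))

/-- Normalized Branson–Gover element `L̄_N = (β/2-N+1)_{2N}·P_N + (β/2-N)_{2N}·Q_N`. -/
noncomputable def Lbar {A : Type*} [CommRing A] [Algebra ℂ A] (x z : A) (β t : ℂ) (N : ℕ) : A :=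
  (poch (β/2 - (N:ℂ) + 1) (2*N)) • Ppoly x β t N + (poch (β/2 - (N:ℂ)) (2*N)) • Qpoly z β t N

/-- Branson–Gover element `L_N = (β/2+N)·P_N + (β/2-N)·Q_N`. -/
noncomputable def Lel {A : Type*} [CommRing A] [Algebra ℂ A] (x z : A) (β t : ℂ) (N : ℕ) : A :=
  ((β/2 + (N:ℂ)) • Ppoly x β t N) + ((β/2 - (N:ℂ)) • Qpoly z β t N)

section MyAux
variable {A : Type*} [CommRing A] [Algebra ℂ A]

lemma reflect_prod (u : ℂ) (m : ℕ) :
    ∏ i ∈ Finset.range m, (u + m - i) = ∏ i ∈ Finset.range m, (u + 1 + i) := by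
  rw [← Finset.prod_range_reflect (fun j => u + 1 + (j:ℂ)) m]
  refine Finset.prod_congr rfl fun i hi => ?_
  have hi' := Finset.mem_range.mp hi
  rw [Nat.cast_sub (by omega), Nat.cast_sub (by omega)]
  push_cast
  ring

lemma poch_prod (u : ℂ) (m : ℕ) :
    ∏ i ∈ Finset.range m, ((u + m - i) * (u - m + 1 + i)) = poch (u - m + 1) (2*m) := by
  rw [Finset.prod_mul_distrib, reflect_prod, poch, two_mul, Finset.prod_range_add]
  rw [mul_comm]
  congr 1
  refine Finset.prod_congr rfl fun i hi => ?_
  push_cast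
  ring

lemma prodA_lemma (β : ℂ) (N j : ℕ) (hj : j ≤ N) :
    ∏ l ∈ Icc (j+1) N, ((β/2 + (N:ℂ) - (l:ℂ) + 1) * (β/2 - (N:ℂ) + (l:ℂ)))
      = poch (β/2 - (N:ℂ) + (j:ℂ) + 1) (2*(N-j)) := by
  rw [← Finset.Ico_add_one_right_eq_Icc, Finset.prod_Ico_eq_prod_range]
  rw [show N + 1 - (j+1) = N - j by omega]
  rw [show β/2 - (N:ℂ) + (j:ℂ) + 1 = β/2 - ((N:ℂ) - (j:ℂ)) + 1 by ring, ← Nat.cast_sub hj,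
    ← poch_prod (β/2) (N-j)]
  refine Finset.prod_congr rfl fun i hi => ?_
  have hi' := Finset.mem_range.mp hi
  rw [Nat.cast_sub hj]
  push_cast
  ring

lemma prodB_lemma (β : ℂ) (N : ℕ) :
    ∏ l ∈ Icc 1 N, ((β/2 + (N:ℂ) - (l:ℂ)) * (β/2 - (N:ℂ) + (l:ℂ) - 1))
      = poch (β/2 - (N:ℂ)) (2*N) := by
  rw [← Finset.Ico_add_one_right_eq_Icc, Finset.prod_Ico_eq_prod_range, Nat.add_sub_cancel]
  rw [show β/2 - (N:ℂ) = β/2 - 1 - (N:ℂ) + 1 by ring, ← poch_prod (β/2 - 1) N]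
  refine Finset.prod_congr rfl fun i hi => ?_
  push_cast
  ring

lemma prod_smul_eq (s : Finset ℕ) (f : ℕ → ℂ) (g : ℕ → A) :
    ∏ l ∈ s, (f l • g l) = (∏ l ∈ s, f l) • ∏ l ∈ s, g l := by
  induction s using Finset.cons_induction with
  | empty => simp
  | cons i s hi ih =>
    rw [Finset.prod_cons, Finset.prod_cons, Finset.prod_cons, ih, smul_mul_smul_comm]

lemma Pp_reindex (x : A) (β t : ℂ) (N : ℕ) :
    ∏ l ∈ Icc 1 N, (x + ((β/2 + (N:ℂ) - (l:ℂ)) * (β/2 - (N:ℂ) + (l:ℂ) - 1) * t) • (1:A))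
      = Ppoly x β t N := by
  rw [Ppoly, ← Finset.Ico_add_one_right_eq_Icc, Finset.prod_Ico_eq_prod_range,
    Finset.prod_Ico_eq_prod_range, Nat.add_sub_cancel]
  rw [← Finset.prod_range_reflect
    (fun i => x + ((β/2 + ((1+i:ℕ):ℂ) - 1) * (β/2 - ((1+i:ℕ):ℂ)) * t) • (1:A)) N]
  refine Finset.prod_congr rfl fun j hj => ?_
  have hj' := Finset.mem_range.mp hj
  refine congrArg (fun s : ℂ => x + s • (1:A)) ?_
  push_cast [Nat.cast_sub (show j ≤ N - 1 by omega), Nat.cast_sub (show 1 ≤ N by omega)]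
  ring

lemma hF_lemma (x : A) (β t : ℂ) (N : ℕ) :
    ∏ l ∈ Icc 1 N, (((β/2 + (N:ℂ) - (l:ℂ) + 1) * (β/2 - (N:ℂ) + (l:ℂ))) • x
        + ((β/2 + (N:ℂ) - (l:ℂ) + 1) * (β/2 - (N:ℂ) + (l:ℂ))
            * ((β/2 + (N:ℂ) - (l:ℂ)) * (β/2 - (N:ℂ) + (l:ℂ) - 1)) * t) • (1:A))
      = poch (β/2 - (N:ℂ) + 1) (2*N) • Ppoly x β t N := by
  have h1 : ∀ l ∈ Icc 1 N,
      ((β/2 + (N:ℂ) - (l:ℂ) + 1) * (β/2 - (N:ℂ) + (l:ℂ))) • x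
        + ((β/2 + (N:ℂ) - (l:ℂ) + 1) * (β/2 - (N:ℂ) + (l:ℂ))
            * ((β/2 + (N:ℂ) - (l:ℂ)) * (β/2 - (N:ℂ) + (l:ℂ) - 1)) * t) • (1:A)
      = ((β/2 + (N:ℂ) - (l:ℂ) + 1) * (β/2 - (N:ℂ) + (l:ℂ)))
          • (x + ((β/2 + (N:ℂ) - (l:ℂ)) * (β/2 - (N:ℂ) + (l:ℂ) - 1) * t) • (1:A)) := by
    intro l _
    rw [smul_add, smul_smul]
    exact congrArg (fun s : ℂ =>
      ((β/2 + (N:ℂ) - (l:ℂ) + 1) * (β/2 - (N:ℂ) + (l:ℂ))) • x + s • (1:A)) (by ring)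
  rw [Finset.prod_congr rfl h1, prod_smul_eq]
  have h2 := prodA_lemma β N 0 (Nat.zero_le N)
  simp only [Nat.cast_zero, Nat.sub_zero, zero_add, add_zero] at h2
  rw [h2, Pp_reindex]

lemma telescope (z : A) (d : ℕ → ℂ) (N : ℕ) :
    ∏ l ∈ Icc 1 N, (z + (d l) • (1:A)) =
      (∑ j ∈ Icc 1 N, (∏ l ∈ Icc (j+1) N, d l) • (z * ∏ l ∈ Icc 1 (j-1), (z + d l • (1:A))))
        + (∏ l ∈ Icc 1 N, d l) • (1:A) := by
  induction N with
  | zero => simp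
  | succ n ih =>
    rw [Finset.prod_Icc_succ_top (Nat.le_add_left 1 n), Finset.prod_Icc_succ_top (Nat.le_add_left 1 n),
      Finset.sum_Icc_succ_top (Nat.le_add_left 1 n)]
    have hs : ∀ j ∈ Icc 1 n, (∏ l ∈ Icc (j+1) (n+1), d l) • (z * ∏ l ∈ Icc 1 (j-1), (z + d l • (1:A)))
        = d (n+1) • ((∏ l ∈ Icc (j+1) n, d l) • (z * ∏ l ∈ Icc 1 (j-1), (z + d l • (1:A)))) := by
      intro j hj
      have hj2 := Finset.mem_Icc.mp hj
      rw [Finset.prod_Icc_succ_top (by omega : j + 1 ≤ n + 1), smul_smul, mul_comm]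
    rw [Finset.sum_congr rfl hs, ← Finset.smul_sum]
    have h2 : Icc (n+1+1) (n+1) = (∅ : Finset ℕ) := by rw [Finset.Icc_eq_empty_iff]; omega
    rw [h2]
    simp only [Finset.prod_empty, one_smul, Nat.add_sub_cancel]
    have hS : ∑ j ∈ Icc 1 n, (∏ l ∈ Icc (j+1) n, d l) • (z * ∏ l ∈ Icc 1 (j-1), (z + d l • (1:A)))
        = (∏ l ∈ Icc 1 n, (z + d l • (1:A))) - (∏ l ∈ Icc 1 n, d l) • (1:A) := by
      rw [ih]; ring
    rw [hS]
    simp only [Algebra.smul_def, map_mul]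
    ring

lemma hG_lemma (z : A) (β t : ℂ) (N : ℕ) :
    ∏ l ∈ Icc 1 N, (((β/2 + (N:ℂ) - (l:ℂ)) * (β/2 - (N:ℂ) + (l:ℂ) - 1)) • z
        + ((β/2 + (N:ℂ) - (l:ℂ) + 1) * (β/2 - (N:ℂ) + (l:ℂ))
            * ((β/2 + (N:ℂ) - (l:ℂ)) * (β/2 - (N:ℂ) + (l:ℂ) - 1)) * t) • (1:A))
      = poch (β/2 - (N:ℂ)) (2*N) • Qpoly z β t N
        + (∏ l ∈ Icc 1 N, ((β/2 + (N:ℂ) - (l:ℂ) + 1) * (β/2 - (N:ℂ) + (l:ℂ))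
            * ((β/2 + (N:ℂ) - (l:ℂ)) * (β/2 - (N:ℂ) + (l:ℂ) - 1)) * t)) • (1:A) := by
  have h1 : ∀ l ∈ Icc 1 N,
      ((β/2 + (N:ℂ) - (l:ℂ)) * (β/2 - (N:ℂ) + (l:ℂ) - 1)) • z
        + ((β/2 + (N:ℂ) - (l:ℂ) + 1) * (β/2 - (N:ℂ) + (l:ℂ))
            * ((β/2 + (N:ℂ) - (l:ℂ)) * (β/2 - (N:ℂ) + (l:ℂ) - 1)) * t) • (1:A)
      = ((β/2 + (N:ℂ) - (l:ℂ)) * (β/2 - (N:ℂ) + (l:ℂ) - 1))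
          • (z + ((β/2 + (N:ℂ) - (l:ℂ) + 1) * (β/2 - (N:ℂ) + (l:ℂ)) * t) • (1:A)) := by
    intro l _
    rw [smul_add, smul_smul]
    exact congrArg (fun s : ℂ =>
      ((β/2 + (N:ℂ) - (l:ℂ)) * (β/2 - (N:ℂ) + (l:ℂ) - 1)) • z + s • (1:A)) (by ring)
  rw [Finset.prod_congr rfl h1, prod_smul_eq, prodB_lemma]
  have htel := telescope z (fun l => (β/2 + (N:ℂ) - (l:ℂ) + 1) * (β/2 - (N:ℂ) + (l:ℂ)) * t) N
  beta_reduce at htel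
  rw [htel, smul_add, smul_smul]
  congr 2
  · -- sum = Qpoly
    rw [Qpoly]
    refine Finset.sum_congr rfl fun j hj => ?_
    have hj2 := Finset.mem_Icc.mp hj
    refine congrArg (fun s : ℂ => s • (z * ∏ l ∈ Icc 1 (j-1),
      (z + ((β/2 + (N:ℂ) - (l:ℂ) + 1) * (β/2 - (N:ℂ) + (l:ℂ)) * t) • (1:A)))) ?_
    rw [Finset.prod_mul_distrib, Finset.prod_const, Nat.card_Icc,
      show N + 1 - (j+1) = N - j by omega, prodA_lemma β N j hj2.2]
  · -- scalar: poch(β/2-N)(2N) * ∏ (A l * t) = ∏ Cc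
    rw [← prodB_lemma β N, ← Finset.prod_mul_distrib]
    exact Finset.prod_congr rfl fun l _ => by ring

lemma prod_mul_right (x z : A) (hxz : x * z = 0) (a c : ℕ → ℂ) (s : Finset ℕ) :
    (∏ l ∈ s, (a l • x + c l • (1:A))) * z = (∏ l ∈ s, c l) • z := by
  induction s using Finset.cons_induction with
  | empty => simp
  | cons i s hi ih =>
    rw [Finset.prod_cons, Finset.prod_cons, mul_assoc, ih]
    simp only [Algebra.smul_def, map_mul] at *
    linear_combination (algebraMap ℂ A (a i) * algebraMap ℂ A (∏ l ∈ s, c l)) * hxz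
      + (algebraMap ℂ A (a i) * x + algebraMap ℂ A (c i)) * (mul_one (algebraMap ℂ A (∏ l ∈ s, c l) * z))

lemma prod_split (x z : A) (hxz : x * z = 0) (a b c : ℕ → ℂ) (s : Finset ℕ) :
    ∏ l ∈ s, (a l • x + b l • z + c l • (1:A)) =
      ∏ l ∈ s, (a l • x + c l • (1:A)) + ∏ l ∈ s, (b l • z + c l • (1:A))
        - (∏ l ∈ s, c l) • (1:A) := by
  induction s using Finset.cons_induction with
  | empty => simp
  | cons i s hi ih =>
    have hzx : z * x = 0 := by rw [mul_comm]; exact hxz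
    have hP := prod_mul_right x z hxz a c s
    have hG := prod_mul_right z x hzx b c s
    rw [Finset.prod_cons, Finset.prod_cons, Finset.prod_cons, Finset.prod_cons, ih]
    simp only [Algebra.smul_def, map_mul] at *
    linear_combination (algebraMap ℂ A (b i)) * hP + (algebraMap ℂ A (a i)) * hG

end MyAux

/-- factorization of the normalized Branson–Gover element into second-order factors. -/
theorem Lbar_factorization {A : Type*} [CommRing A] [Algebra ℂ A] (x z : A) (hxz : x * z = 0)
    (β t : ℂ) (N : ℕ) (hN : 1 ≤ N) :
    Lbar x z β t N =
      ∏ l ∈ Finset.Icc 1 N,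
        (((β/2 + (N:ℂ) - (l:ℂ) + 1)*(β/2 - (N:ℂ) + (l:ℂ))) • x
          + ((β/2 + (N:ℂ) - (l:ℂ))*(β/2 - (N:ℂ) + (l:ℂ) - 1)) • z
          + ((β/2 - (N:ℂ) + (l:ℂ) - 1)*(β/2 - (N:ℂ) + (l:ℂ))*(β/2 + (N:ℂ) - (l:ℂ))
              *(β/2 + (N:ℂ) - (l:ℂ) + 1)*t) • (1 : A)) := by
  have key := prod_split x z hxz
    (fun l => (β/2 + (N:ℂ) - (l:ℂ) + 1) * (β/2 - (N:ℂ) + (l:ℂ)))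
    (fun l => (β/2 + (N:ℂ) - (l:ℂ)) * (β/2 - (N:ℂ) + (l:ℂ) - 1))
    (fun l => (β/2 + (N:ℂ) - (l:ℂ) + 1) * (β/2 - (N:ℂ) + (l:ℂ))
        * ((β/2 + (N:ℂ) - (l:ℂ)) * (β/2 - (N:ℂ) + (l:ℂ) - 1)) * t)
    (Icc 1 N)
  beta_reduce at key
  have hmatch : ∀ l ∈ Icc 1 N,
      (((β/2 + (N:ℂ) - (l:ℂ) + 1)*(β/2 - (N:ℂ) + (l:ℂ))) • x
          + ((β/2 + (N:ℂ) - (l:ℂ))*(β/2 - (N:ℂ) + (l:ℂ) - 1)) • z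
          + ((β/2 - (N:ℂ) + (l:ℂ) - 1)*(β/2 - (N:ℂ) + (l:ℂ))*(β/2 + (N:ℂ) - (l:ℂ))
              *(β/2 + (N:ℂ) - (l:ℂ) + 1)*t) • (1 : A))
      = (((β/2 + (N:ℂ) - (l:ℂ) + 1) * (β/2 - (N:ℂ) + (l:ℂ))) • x
          + ((β/2 + (N:ℂ) - (l:ℂ)) * (β/2 - (N:ℂ) + (l:ℂ) - 1)) • z
          + ((β/2 + (N:ℂ) - (l:ℂ) + 1) * (β/2 - (N:ℂ) + (l:ℂ))
              * ((β/2 + (N:ℂ) - (l:ℂ)) * (β/2 - (N:ℂ) + (l:ℂ) - 1)) * t) • (1:A)) := by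
    intro l _
    exact congrArg (fun s : ℂ =>
      (((β/2 + (N:ℂ) - (l:ℂ) + 1)*(β/2 - (N:ℂ) + (l:ℂ))) • x
        + ((β/2 + (N:ℂ) - (l:ℂ))*(β/2 - (N:ℂ) + (l:ℂ) - 1)) • z + s • (1:A))) (by ring)
  rw [Finset.prod_congr rfl hmatch, key, hF_lemma, hG_lemma, Lbar]
  abel
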